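/- arXiv:1402.4685 — 4 statements merged into one kernel-verified Lean document; each statement's English description precedes it below -/
import Mathlib

section
/- Let N ≥ 1, let L be a real symmetric positive semidefinite N×N matrix with kernel 𝓜, let P be the orthogonal projection of ℂ^N onto the complexification of 𝓜, and let S be a real symmetric N×N matrix such that S + L is positive definite. Then there exist constants c₁ > 0 and C ≥ 0 such that for every z ∈ ℂ^N, Re⟨S z, z⟩ ≥ c₁ |z|² − C |(I−P) z|². -/
open Matrix ComplexConjugate

/-- The action of a real `N × N` matrix on `ℂ^N`, via complexification. -/
noncomputable def matC {N : ℕ} (M : Matrix (Fin N) (Fin N) ℝ) :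
    EuclideanSpace ℂ (Fin N) →ₗ[ℂ] EuclideanSpace ℂ (Fin N) :=
  Matrix.toEuclideanLin (M.map (Complex.ofReal))

/-- The orthogonal projection of `ℂ^N` onto the complexification of `ker L`. -/
noncomputable def projKer {N : ℕ} (L : Matrix (Fin N) (Fin N) ℝ)
    (z : EuclideanSpace ℂ (Fin N)) : EuclideanSpace ℂ (Fin N) :=
  (Submodule.orthogonalProjectionOnto (LinearMap.ker (matC L)) z : EuclideanSpace ℂ (Fin N))

lemma matC_symm {N : ℕ} {M : Matrix (Fin N) (Fin N) ℝ} (hM : M.IsSymm) :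
    (matC M).IsSymmetric := by
  rw [matC, ← Matrix.isHermitian_iff_isSymmetric]
  have h : (M.map Complex.ofReal)ᴴ = Mᵀ.map Complex.ofReal := by
    ext i j; simp [conjTranspose_apply]
  rw [Matrix.IsHermitian, h, hM]

lemma matC_re_inner {N : ℕ} (M : Matrix (Fin N) (Fin N) ℝ) (z : EuclideanSpace ℂ (Fin N)) :
    (inner ℂ (matC M z) z : ℂ).re
      = (fun i => (z i).re) ⬝ᵥ M *ᵥ (fun i => (z i).re)
        + (fun i => (z i).im) ⬝ᵥ M *ᵥ (fun i => (z i).im) := by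
  have h1 : (inner ℂ (matC M z) z : ℂ) = conj (inner ℂ z (matC M z) : ℂ) := by
    rw [inner_conj_symm]
  rw [h1, Complex.conj_re]
  have h2 : (inner ℂ z (matC M z) : ℂ)
      = star (z : Fin N → ℂ) ⬝ᵥ (M.map Complex.ofReal) *ᵥ (z : Fin N → ℂ) := by
    simp [matC, Matrix.toEuclideanLin_apply, inner, dotProduct, mulVec, mul_comm]
  rw [h2]
  simp only [dotProduct, mulVec, map_apply, Pi.star_apply, Finset.mul_sum, Complex.re_sum]
  rw [← Finset.sum_add_distrib]
  refine Finset.sum_congr rfl fun i _ => ?_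
  rw [← Finset.sum_add_distrib]
  refine Finset.sum_congr rfl fun j _ => ?_
  simp [Complex.mul_re, Complex.mul_im]

lemma matC_re_inner_pos {N : ℕ} {M : Matrix (Fin N) (Fin N) ℝ} (hM : M.PosDef)
    {z : EuclideanSpace ℂ (Fin N)} (hz : z ≠ 0) :
    0 < (inner ℂ (matC M z) z : ℂ).re := by
  rw [matC_re_inner]
  set u : Fin N → ℝ := fun i => (z i).re
  set v : Fin N → ℝ := fun i => (z i).im
  have huv : u ≠ 0 ∨ v ≠ 0 := by
    by_contra h
    push_neg at h
    apply hz
    ext i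
    have h1 := congrFun h.1 i
    have h2 := congrFun h.2 i
    exact Complex.ext h1 h2
  have hsu : star u = u := rfl
  have hq : ∀ x : Fin N → ℝ, 0 ≤ x ⬝ᵥ M *ᵥ x := fun x => by
    simpa using hM.posSemidef.dotProduct_mulVec_nonneg x
  have hq' : ∀ x : Fin N → ℝ, x ≠ 0 → 0 < x ⬝ᵥ M *ᵥ x := fun x hx => by
    simpa using hM.dotProduct_mulVec_pos hx
  rcases huv with h | h
  · have := hq' u h
    have := hq v
    linarith
  · have := hq' v h
    have := hq u
    linarith

theorem statement1 (N : ℕ) (hN : 1 ≤ N)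
    (L S : Matrix (Fin N) (Fin N) ℝ)
    (hL : L.PosSemidef) (hLs : L.IsSymm) (hS : S.IsSymm) (hSL : (S + L).PosDef) :
    ∃ c₁ C : ℝ, 0 < c₁ ∧ 0 ≤ C ∧
      ∀ z : EuclideanSpace ℂ (Fin N),
        (inner ℂ (matC S z) z : ℂ).re ≥ c₁ * ‖z‖ ^ 2 - C * ‖z - projKer L z‖ ^ 2 := by
  set A := S + L with hA
  set f : EuclideanSpace ℂ (Fin N) → ℝ := fun z => (inner ℂ (matC A z) z : ℂ).re with hfdef
  have hf : Continuous f := by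
    have hT : Continuous (matC A) := (matC A).continuous_of_finiteDimensional
    exact Complex.continuous_re.comp (hT.inner continuous_id)
  have hsph : (Metric.sphere (0 : EuclideanSpace ℂ (Fin N)) 1).Nonempty := by
    refine ⟨EuclideanSpace.single (⟨0, hN⟩ : Fin N) (1 : ℂ), ?_⟩
    simp [EuclideanSpace.norm_single]
  obtain ⟨z₀, hz₀mem, hz₀min⟩ :=
    (isCompact_sphere (0 : EuclideanSpace ℂ (Fin N)) 1).exists_isMinOn hsph hf.continuousOn
  have hz₀norm : ‖z₀‖ = 1 := by simpa using hz₀mem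
  have hz₀ne : z₀ ≠ 0 := by
    intro h; rw [h, norm_zero] at hz₀norm; norm_num at hz₀norm
  set c₁ := f z₀ with hc₁def
  have hc₁ : 0 < c₁ := matC_re_inner_pos hSL hz₀ne
  set C := ‖LinearMap.toContinuousLinearMap (matC L)‖ with hCdef
  refine ⟨c₁, C, hc₁, norm_nonneg _, fun z => ?_⟩
  -- step 1: f z ≥ c₁ ‖z‖²
  have hstep1 : c₁ * ‖z‖ ^ 2 ≤ f z := by
    rcases eq_or_ne z 0 with rfl | hz
    · simp [hfdef]
    · have hnz : (0:ℝ) < ‖z‖ := norm_pos_iff.mpr hz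
      set a : ℂ := ((‖z‖⁻¹ : ℝ) : ℂ) with ha
      have hwnorm : ‖a • z‖ = 1 := by
        rw [norm_smul, ha, Complex.norm_real, Real.norm_eq_abs, abs_of_pos (by positivity)]
        field_simp
      have hmem : a • z ∈ Metric.sphere (0 : EuclideanSpace ℂ (Fin N)) 1 := by
        simp [hwnorm]
      have hmin := hz₀min hmem
      have hconj : conj a * a = ((‖z‖⁻¹ ^ 2 : ℝ) : ℂ) := by
        rw [ha, Complex.conj_ofReal]; push_cast; ring
      have hscale : f (a • z) = ‖z‖⁻¹ ^ 2 * f z := by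
        show (inner ℂ (matC A (a • z)) (a • z) : ℂ).re = _
        rw [(matC A).map_smul, inner_smul_left, inner_smul_right, ← mul_assoc, hconj,
          Complex.re_ofReal_mul]
      have hmin' : c₁ ≤ f (a • z) := hmin
      rw [hscale] at hmin'
      have : c₁ ≤ ‖z‖⁻¹ ^ 2 * f z := hmin' 
      have h2 : c₁ * ‖z‖ ^ 2 ≤ (‖z‖⁻¹ ^ 2 * f z) * ‖z‖ ^ 2 := by
        apply mul_le_mul_of_nonneg_right this (by positivity)
      calc c₁ * ‖z‖ ^ 2 ≤ (‖z‖⁻¹ ^ 2 * f z) * ‖z‖ ^ 2 := h2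
        _ = f z := by field_simp
  -- step 2: L-part bound
  set w := z - projKer L z with hw
  have hkermem : projKer L z ∈ LinearMap.ker (matC L) := by unfold projKer; exact SetLike.coe_mem _
  have hker : matC L (projKer L z) = 0 := LinearMap.mem_ker.mp hkermem
  have hLz : matC L z = matC L w := by
    rw [hw, map_sub, hker, sub_zero]
  have hstep2 : (inner ℂ (matC L z) z : ℂ).re ≤ C * ‖w‖ ^ 2 := by
    have hzw : z = w + projKer L z := by rw [hw]; abel
    have hsplit : (inner ℂ (matC L z) z : ℂ)
        = inner ℂ (matC L w) w + inner ℂ (matC L w) (projKer L z) := by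
      rw [hLz]
      conv_lhs => rw [hzw]
      rw [inner_add_right]
    have hzero : (inner ℂ (matC L w) (projKer L z) : ℂ) = 0 := by
      rw [matC_symm hLs w (projKer L z), hker, inner_zero_right]
    rw [hsplit, hzero, add_zero]
    have h1 : (inner ℂ (matC L w) w : ℂ).re ≤ ‖(inner ℂ (matC L w) w : ℂ)‖ :=
      Complex.re_le_norm _
    have h2 : ‖(inner ℂ (matC L w) w : ℂ)‖ ≤ ‖matC L w‖ * ‖w‖ := norm_inner_le_norm _ _
    have h3 : ‖matC L w‖ ≤ C * ‖w‖ :=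
      (LinearMap.toContinuousLinearMap (matC L)).le_opNorm w
    nlinarith [norm_nonneg w, norm_nonneg (matC L w)]
  -- combine
  have hadd : matC A = matC S + matC L := by
    rw [hA, matC, Matrix.map_add _ (by intro a b; push_cast; ring), map_add]; rfl
  have hsum : f z = (inner ℂ (matC S z) z : ℂ).re + (inner ℂ (matC L z) z : ℂ).re := by
    rw [hfdef]
    simp only [hadd, LinearMap.add_apply, inner_add_left, Complex.add_re]
  have := hstep1
  rw [hsum] at this
  linarith
end

section
/- Assume the [SK]-hypothesis: there is a continuous map K from the unit sphere S^{n−1} to the real N×N matrices such that for every ω ∈ S^{n−1}, K(−ω) = −K(ω), K(ω)A⁰ is skew-symmetric, and [K(ω)A(ω)]' + L is positive definite. Then there exists a constant c > 0 such that for every ξ ∈ ℝⁿ with ξ ≠ 0, every λ ∈ ℂ and every v ∈ ℂ^N with v ≠ 0 satisfying (λ A⁰ + i A(ξ) + L) v = 0, one has Re λ ≤ − c |ξ|² / (1 + |ξ|²). -/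
set_option maxHeartbeats 1000000


open Matrix

/-- The symmetric part `[X]' = (X + Xᵀ)/2` of a square matrix. -/
noncomputable def symPart {N : ℕ} (X : Matrix (Fin N) (Fin N) ℝ) : Matrix (Fin N) (Fin N) ℝ :=
  (2⁻¹ : ℝ) • (X + X.transpose)


noncomputable def qf {N : ℕ} (M : Matrix (Fin N) (Fin N) ℝ) (v : Fin N → ℂ) : ℂ :=
  star v ⬝ᵥ (M.map (Complex.ofReal)).mulVec v

lemma qf_re {N : ℕ} (M : Matrix (Fin N) (Fin N) ℝ) (v : Fin N → ℂ) :
    (qf M v).re = (fun i => (v i).re) ⬝ᵥ M.mulVec (fun i => (v i).re)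
      + (fun i => (v i).im) ⬝ᵥ M.mulVec (fun i => (v i).im) := by
  classical
  simp only [qf, dotProduct, mulVec, Finset.mul_sum, Pi.star_apply, Matrix.map_apply,
    Complex.re_sum, ← Finset.sum_add_distrib]
  refine Finset.sum_congr rfl fun i _ => ?_
  refine Finset.sum_congr rfl fun j _ => ?_
  simp [Complex.mul_re, Complex.mul_im]
  try ring

lemma qf_im {N : ℕ} (M : Matrix (Fin N) (Fin N) ℝ) (v : Fin N → ℂ) :
    (qf M v).im = (fun i => (v i).re) ⬝ᵥ M.mulVec (fun i => (v i).im)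
      - (fun i => (v i).im) ⬝ᵥ M.mulVec (fun i => (v i).re) := by
  classical
  simp only [qf, dotProduct, mulVec, Finset.mul_sum, Pi.star_apply, Matrix.map_apply,
    Complex.im_sum, ← Finset.sum_sub_distrib]
  refine Finset.sum_congr rfl fun i _ => ?_
  refine Finset.sum_congr rfl fun j _ => ?_
  simp [Complex.mul_re, Complex.mul_im]
  try ring

lemma dot_mulVec_symm {N : ℕ} (M : Matrix (Fin N) (Fin N) ℝ) (x y : Fin N → ℝ) :
    x ⬝ᵥ M.mulVec y = y ⬝ᵥ M.transpose.mulVec x := by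
  rw [Matrix.dotProduct_mulVec, Matrix.mulVec_transpose, dotProduct_comm]

lemma qf_im_of_symm {N : ℕ} {M : Matrix (Fin N) (Fin N) ℝ} (hM : M.IsSymm) (v : Fin N → ℂ) :
    (qf M v).im = 0 := by
  rw [qf_im, dot_mulVec_symm, hM.eq, sub_self]

lemma qf_re_of_skew {N : ℕ} {M : Matrix (Fin N) (Fin N) ℝ} (hM : M.transpose = -M)
    (v : Fin N → ℂ) : (qf M v).re = 0 := by
  have h : ∀ x : Fin N → ℝ, x ⬝ᵥ M.mulVec x = 0 := by
    intro x
    have := dot_mulVec_symm M x x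
    rw [hM, Matrix.neg_mulVec, dotProduct_neg] at this
    linarith
  rw [qf_re, h, h, add_zero]

lemma qf_add {N : ℕ} (M M' : Matrix (Fin N) (Fin N) ℝ) (v : Fin N → ℂ) :
    qf (M + M') v = qf M v + qf M' v := by
  simp [qf, Matrix.map_add, Matrix.add_mulVec, dotProduct_add]

lemma qf_smul {N : ℕ} (r : ℝ) (M : Matrix (Fin N) (Fin N) ℝ) (v : Fin N → ℂ) :
    qf (r • M) v = (r : ℂ) * qf M v := by
  have : (r • M).map (Complex.ofReal) = (r : ℂ) • M.map Complex.ofReal := by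
    ext i j; simp
  simp [qf, this, Matrix.smul_mulVec, dotProduct_smul]

lemma qf_sum {N n : ℕ} (M : Fin n → Matrix (Fin N) (Fin N) ℝ) (v : Fin N → ℂ)
    (c : Fin n → ℝ) : qf (∑ j, c j • M j) v = ∑ j, (c j : ℂ) * qf (M j) v := by
  induction' (Finset.univ : Finset (Fin n)) using Finset.induction with a s ha ih
  · simp [qf]
  · simp [Finset.sum_insert ha, qf_add, qf_smul, ih]

lemma qf_smul_vec {N : ℕ} (M : Matrix (Fin N) (Fin N) ℝ) (r : ℝ) (v : Fin N → ℂ) :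
    qf M ((r : ℂ) • v) = (r : ℂ)^2 * qf M v := by
  simp [qf, star_smul, Matrix.mulVec_smul, smul_dotProduct, dotProduct_smul, Complex.conj_ofReal]
  ring

lemma qf_re_nonneg {N : ℕ} {M : Matrix (Fin N) (Fin N) ℝ} (hM : M.PosSemidef)
    (v : Fin N → ℂ) : 0 ≤ (qf M v).re := by
  rw [qf_re]
  have h1 := hM.dotProduct_mulVec_nonneg (fun i => (v i).re)
  have h2 := hM.dotProduct_mulVec_nonneg (fun i => (v i).im)
  simp only [star_trivial, RCLike.re_to_real] at h1 h2
  positivity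

lemma qf_re_pos {N : ℕ} {M : Matrix (Fin N) (Fin N) ℝ} (hM : M.PosDef)
    {v : Fin N → ℂ} (hv : v ≠ 0) : 0 < (qf M v).re := by
  rw [qf_re]
  have hvv : (fun i => (v i).re) ≠ 0 ∨ (fun i => (v i).im) ≠ 0 := by
    by_contra h
    push_neg at h
    apply hv
    funext i
    have h1 := congrFun h.1 i
    have h2 := congrFun h.2 i
    simp only [Pi.zero_apply] at h1 h2 ⊢
    exact Complex.ext h1 h2
  have hsd := hM.posSemidef
  rcases hvv with h | h
  · have h1 := hM.dotProduct_mulVec_pos h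
    have h2 := hsd.dotProduct_mulVec_nonneg (fun i => (v i).im)
    simp only [star_trivial, RCLike.re_to_real] at h1 h2
    linarith
  · have h1 := hsd.dotProduct_mulVec_nonneg (fun i => (v i).re)
    have h2 := hM.dotProduct_mulVec_pos h
    simp only [star_trivial, RCLike.re_to_real] at h1 h2
    linarith

lemma dot_bound {N : ℕ} (M : Matrix (Fin N) (Fin N) ℝ) (x y : Fin N → ℂ) (cx cy : ℝ)
    (hcx : 0 ≤ cx) (hcy : 0 ≤ cy)
    (hx : ∀ i, ‖x i‖ ≤ cx) (hy : ∀ j, ‖y j‖ ≤ cy) :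
    ‖star x ⬝ᵥ (M.map Complex.ofReal).mulVec y‖
      ≤ (∑ i, ∑ j, |M i j|) * (cx * cy) := by
  classical
  calc ‖star x ⬝ᵥ (M.map Complex.ofReal).mulVec y‖
      ≤ ∑ i, ‖star x i * ((M.map Complex.ofReal).mulVec y i)‖ :=
        norm_sum_le _ _
    _ ≤ ∑ i, ∑ j, |M i j| * (cx * cy) := by
        refine Finset.sum_le_sum fun i _ => ?_
        rw [show ((M.map Complex.ofReal).mulVec y i) = ∑ j, (M i j : ℂ) * y j from rfl]
        rw [Finset.mul_sum]
        calc ‖∑ j, star x i * ((M i j : ℂ) * y j)‖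
            ≤ ∑ j, ‖star x i * ((M i j : ℂ) * y j)‖ := norm_sum_le _ _
          _ ≤ ∑ j, |M i j| * (cx * cy) := by
              refine Finset.sum_le_sum fun j _ => ?_
              rw [norm_mul, norm_mul, Pi.star_apply, Complex.star_def,
                Complex.norm_conj, Complex.norm_real, Real.norm_eq_abs]
              have hxx := hx i
              have hyy := hy j
              have h1 : (0:ℝ) ≤ ‖x i‖ := norm_nonneg _
              have h2 : (0:ℝ) ≤ ‖y j‖ := norm_nonneg _
              calc ‖x i‖ * (|M i j| * ‖y j‖)
                  ≤ cx * (|M i j| * cy) := by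
                    apply mul_le_mul hxx _ (by positivity) hcx
                    exact mul_le_mul_of_nonneg_left hyy (abs_nonneg _)
                _ = |M i j| * (cx * cy) := by ring
    _ = (∑ i, ∑ j, |M i j|) * (cx * cy) := by
        rw [Finset.sum_mul]
        exact Finset.sum_congr rfl fun i _ => by rw [Finset.sum_mul]

lemma coord_le_norm {N : ℕ} (v : EuclideanSpace ℂ (Fin N)) (i : Fin N) :
    ‖v i‖ ≤ ‖v‖ := by
  have : ‖v i‖ ≤ ‖v‖ := by
    rw [EuclideanSpace.norm_eq]
    have : ‖v i‖ = Real.sqrt (‖v i‖^2) := by rw [Real.sqrt_sq (norm_nonneg _)]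
    rw [this]
    apply Real.sqrt_le_sqrt
    exact Finset.single_le_sum (f := fun j => ‖v j‖^2) (fun j _ => sq_nonneg _) (Finset.mem_univ i)
  exact this

lemma qf_re_transpose {N : ℕ} (M : Matrix (Fin N) (Fin N) ℝ) (v : Fin N → ℂ) :
    (qf M.transpose v).re = (qf M v).re := by
  rw [qf_re, qf_re, dot_mulVec_symm M.transpose, dot_mulVec_symm M.transpose,
    Matrix.transpose_transpose]

lemma qf_re_symPart {N : ℕ} (M : Matrix (Fin N) (Fin N) ℝ) (v : Fin N → ℂ) :
    (qf (symPart M) v).re = (qf M v).re := by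
  rw [symPart, qf_smul, qf_add]
  have ht := qf_re_transpose M v
  simp only [Complex.mul_re, Complex.add_re, Complex.ofReal_re, Complex.ofReal_im,
    Complex.add_im, zero_mul, sub_zero, ht]
  ring

lemma mapC_mul {N : ℕ} (P Q : Matrix (Fin N) (Fin N) ℝ) :
    (P * Q).map (Complex.ofReal) = P.map Complex.ofReal * Q.map Complex.ofReal := by
  ext i j
  simp [Matrix.mul_apply, Matrix.map_apply]

lemma starw {N : ℕ} (B : Matrix (Fin N) (Fin N) ℝ) (hBs : B.transpose = B) (v : Fin N → ℂ) :
    star v ⬝ᵥ ((B*B).map Complex.ofReal).mulVec v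
      = star ((B.map Complex.ofReal).mulVec v) ⬝ᵥ ((B.map Complex.ofReal).mulVec v) := by
  have hH : (B.map Complex.ofReal)ᴴ = B.map Complex.ofReal := by
    ext i j
    simp [Matrix.conjTranspose_apply, Matrix.map_apply, Complex.conj_ofReal]
    exact congrFun (congrFun hBs j) i ▸ rfl
  rw [mapC_mul, ← Matrix.mulVec_mulVec, Matrix.dotProduct_mulVec, Matrix.star_mulVec, hH]

lemma abs_coord_le {N : ℕ} (w : Fin N → ℂ) (j : Fin N) :
    ‖w j‖ ≤ Real.sqrt ((star w ⬝ᵥ w).re) := by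
  have h : (star w ⬝ᵥ w).re = ∑ i, Complex.normSq (w i) := by
    simp only [dotProduct, Pi.star_apply, Complex.re_sum]
    refine Finset.sum_congr rfl fun i _ => ?_
    rw [Complex.star_def, mul_comm, Complex.mul_conj, Complex.ofReal_re]
  rw [h, Complex.norm_def]
  apply Real.sqrt_le_sqrt
  exact Finset.single_le_sum (f := fun i => Complex.normSq (w i))
    (fun i _ => Complex.normSq_nonneg _) (Finset.mem_univ j)

lemma qf_re' {N : ℕ} (M : Matrix (Fin N) (Fin N) ℝ) (v : Fin N → ℂ) :
    (qf M v).re = ∑ i, ∑ j, M i j * ((v i).re * (v j).re + (v i).im * (v j).im) := by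
  classical
  simp only [qf, dotProduct, mulVec, Finset.mul_sum, Pi.star_apply, Matrix.map_apply,
    Complex.re_sum]
  refine Finset.sum_congr rfl fun i _ => ?_
  refine Finset.sum_congr rfl fun j _ => ?_
  simp [Complex.mul_re, Complex.mul_im]
  try ring

lemma absSum_mul_le {N : ℕ} (P Q : Matrix (Fin N) (Fin N) ℝ) :
    ∑ i, ∑ j, |(P * Q) i j| ≤ (∑ i, ∑ j, |P i j|) * (∑ i, ∑ j, |Q i j|) := by
  classical
  have hQ : ∀ k : Fin N, (∑ j, |Q k j|) ≤ ∑ k', ∑ j, |Q k' j| := fun k =>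
    Finset.single_le_sum (f := fun k' => ∑ j, |Q k' j|)
      (fun k' _ => Finset.sum_nonneg fun j _ => abs_nonneg _) (Finset.mem_univ k)
  calc ∑ i, ∑ j, |(P * Q) i j|
      ≤ ∑ i, ∑ j, ∑ k, |P i k| * |Q k j| := by
        refine Finset.sum_le_sum fun i _ => Finset.sum_le_sum fun j _ => ?_
        rw [Matrix.mul_apply]
        calc |∑ k, P i k * Q k j| ≤ ∑ k, |P i k * Q k j| := Finset.abs_sum_le_sum_abs _ _
          _ = ∑ k, |P i k| * |Q k j| := by simp [abs_mul]
    _ = ∑ i, ∑ k, |P i k| * ∑ j, |Q k j| := by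
        refine Finset.sum_congr rfl fun i _ => ?_
        rw [Finset.sum_comm]
        exact Finset.sum_congr rfl fun k _ => by rw [Finset.mul_sum]
    _ ≤ ∑ i, ∑ k, |P i k| * ∑ k', ∑ j, |Q k' j| := by
        refine Finset.sum_le_sum fun i _ => Finset.sum_le_sum fun k _ => ?_
        exact mul_le_mul_of_nonneg_left (hQ k) (abs_nonneg _)
    _ = (∑ i, ∑ j, |P i j|) * (∑ i, ∑ j, |Q i j|) := by
        rw [Finset.sum_mul]
        exact Finset.sum_congr rfl fun i _ => by rw [Finset.sum_mul]


lemma arith_key (θ r μ a ℓ β ε α CK SA0 SB t : ℝ)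
    (ht : 0 < t) (hr : 0 < r) (hμ0 : 0 ≤ μ) (hCK0 : 0 ≤ CK) (hSA00 : 0 ≤ SA0)
    (hSB0 : 0 ≤ SB)
    (hla : ℓ = μ * a) (hab : a ≤ SA0 * t^2)
    (hβb : |β| ≤ CK * SA0 * t^2) (hεb : |ε| ≤ CK * SB * (t * Real.sqrt ℓ))
    (hθv : θ * t^2 ≤ α + ℓ) (hrα : r * α = μ * β - ε) :
    θ * r ≤ μ * (CK * SA0) + CK * SB * (Real.sqrt μ * Real.sqrt SA0) + μ * SA0 * r := by
  have hl2 : ℓ ≤ μ * (SA0 * t^2) := by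
    rw [hla]; exact mul_le_mul_of_nonneg_left hab hμ0
  have hsqℓ : Real.sqrt ℓ ≤ Real.sqrt μ * Real.sqrt SA0 * t := by
    calc Real.sqrt ℓ ≤ Real.sqrt (μ * (SA0 * t^2)) := Real.sqrt_le_sqrt hl2
      _ = Real.sqrt μ * Real.sqrt SA0 * t := by
        rw [Real.sqrt_mul hμ0, Real.sqrt_mul hSA00, Real.sqrt_sq ht.le]
        ring
  have hA' : θ * t^2 - ℓ ≤ α := by linarith
  have hB' : θ * t^2 * r - ℓ * r ≤ μ * β - ε := by
    have h := mul_le_mul_of_nonneg_right hA' hr.le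
    rw [sub_mul, mul_comm α r, hrα] at h
    linarith
  have hd1 : μ * β ≤ μ * (CK * SA0 * t^2) :=
    mul_le_mul_of_nonneg_left (le_trans (le_abs_self β) hβb) hμ0
  have hd2 : -ε ≤ CK * SB * (Real.sqrt μ * Real.sqrt SA0 * t^2) := by
    have h1' : -ε ≤ |ε| := neg_le_abs _
    have h2' : t * Real.sqrt ℓ ≤ t * (Real.sqrt μ * Real.sqrt SA0 * t) :=
      mul_le_mul_of_nonneg_left hsqℓ ht.le
    have h3' : CK * SB * (t * Real.sqrt ℓ) ≤ CK * SB * (Real.sqrt μ * Real.sqrt SA0 * t^2) := by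
      calc CK * SB * (t * Real.sqrt ℓ)
          ≤ CK * SB * (t * (Real.sqrt μ * Real.sqrt SA0 * t)) :=
            mul_le_mul_of_nonneg_left h2' (by positivity)
        _ = CK * SB * (Real.sqrt μ * Real.sqrt SA0 * t^2) := by ring
    linarith
  have hd3 : ℓ * r ≤ μ * SA0 * t^2 * r := by
    calc ℓ * r ≤ (μ * (SA0 * t^2)) * r := mul_le_mul_of_nonneg_right hl2 hr.le
      _ = μ * SA0 * t^2 * r := by ring
  have hKey : θ * r * t^2
      ≤ (μ * (CK * SA0) + CK * SB * (Real.sqrt μ * Real.sqrt SA0) + μ * SA0 * r) * t^2 := by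
    nlinarith [hB', hd1, hd2, hd3]
  exact le_of_mul_le_mul_right hKey (by positivity)

lemma arith_main (θ D CK SA0 SB c r μ : ℝ)
    (hθpos : 0 < θ) (hCK0 : 0 ≤ CK) (hSA00 : 0 ≤ SA0) (hSB0 : 0 ≤ SB)
    (hDdef : D = SA0 + CK * SA0 + CK * SB * Real.sqrt SA0 + 1)
    (hc0 : 0 < c) (hc1 : c ≤ 1) (hc2 : c ≤ θ^2 / (2 * D^2))
    (hr : 0 < r) (hμ0 : 0 ≤ μ)
    (hμlt : μ ≤ c * r^2 / (1 + r^2))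
    (hdiv : θ * r ≤ μ * (CK * SA0) + CK * SB * (Real.sqrt μ * Real.sqrt SA0) + μ * SA0 * r) :
    False := by
  have hD : 0 < D := by rw [hDdef]; positivity
  have h1r : (0:ℝ) < 1 + r^2 := by positivity
  have hμc1 : μ ≤ c := by
    have h : c * r^2 / (1 + r^2) ≤ c := by
      rw [div_le_iff₀ h1r]
      nlinarith
    linarith
  have hμc2 : μ ≤ c * r := by
    have h : c * r^2 / (1 + r^2) ≤ c * r := by
      rw [div_le_iff₀ h1r]
      nlinarith [mul_nonneg (mul_nonneg hc0.le hr.le) (sq_nonneg (r - 1))]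
    linarith
  have hμc3 : Real.sqrt μ ≤ Real.sqrt c * r := by
    have h1' : μ ≤ c * r^2 := by
      have h : c * r^2 / (1 + r^2) ≤ c * r^2 := by
        rw [div_le_iff₀ h1r]
        nlinarith [mul_nonneg (mul_nonneg hc0.le (sq_nonneg r)) (sq_nonneg r)]
      linarith
    calc Real.sqrt μ ≤ Real.sqrt (c * r^2) := Real.sqrt_le_sqrt h1'
      _ = Real.sqrt c * r := by rw [Real.sqrt_mul hc0.le, Real.sqrt_sq hr.le]
  have hsc0 : (0:ℝ) ≤ Real.sqrt c := Real.sqrt_nonneg _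
  have hcsc : c ≤ Real.sqrt c := by
    have h1' : Real.sqrt c ≤ 1 := Real.sqrt_le_one.mpr hc1
    nlinarith [Real.mul_self_sqrt hc0.le]
  have e1 : μ * (CK * SA0) ≤ (Real.sqrt c * r) * (CK * SA0) := by
    have : μ ≤ Real.sqrt c * r := le_trans hμc2 (by nlinarith)
    exact mul_le_mul_of_nonneg_right this (by positivity)
  have e2 : CK * SB * (Real.sqrt μ * Real.sqrt SA0)
      ≤ CK * SB * ((Real.sqrt c * r) * Real.sqrt SA0) := by
    apply mul_le_mul_of_nonneg_left _ (by positivity)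
    exact mul_le_mul_of_nonneg_right hμc3 (Real.sqrt_nonneg _)
  have e3 : μ * SA0 * r ≤ Real.sqrt c * SA0 * r := by
    have h : μ * SA0 ≤ Real.sqrt c * SA0 :=
      mul_le_mul_of_nonneg_right (le_trans hμc1 hcsc) hSA00
    exact mul_le_mul_of_nonneg_right h hr.le
  have hfin1 : θ * r ≤ (Real.sqrt c * D) * r := by
    have expand : (Real.sqrt c * D) * r = (Real.sqrt c * r) * (CK * SA0)
        + CK * SB * ((Real.sqrt c * r) * Real.sqrt SA0) + Real.sqrt c * SA0 * r
        + Real.sqrt c * r := by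
      rw [hDdef]; ring
    have hsr : (0:ℝ) ≤ Real.sqrt c * r := by positivity
    linarith
  have hfin2 : θ ≤ Real.sqrt c * D := le_of_mul_le_mul_right
    (by linarith : θ * r ≤ (Real.sqrt c * D) * r) hr
  have hsq : θ^2 ≤ c * D^2 := by
    have h1' : θ * θ ≤ (Real.sqrt c * D) * (Real.sqrt c * D) :=
      mul_le_mul hfin2 hfin2 hθpos.le (by positivity)
    have hss : Real.sqrt c * Real.sqrt c = c := Real.mul_self_sqrt hc0.le
    have h2' : (Real.sqrt c * D) * (Real.sqrt c * D) = c * D^2 := by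
      calc (Real.sqrt c * D) * (Real.sqrt c * D)
          = (Real.sqrt c * Real.sqrt c) * (D * D) := by ring
        _ = c * D^2 := by rw [hss]; ring
    calc θ^2 = θ * θ := sq θ
      _ ≤ (Real.sqrt c * D) * (Real.sqrt c * D) := h1'
      _ = c * D^2 := h2'
  have hcd : c * D^2 ≤ θ^2 / 2 := by
    have h := mul_le_mul_of_nonneg_right hc2 (sq_nonneg D)
    have hD2 : (0:ℝ) < D^2 := by positivity
    have h2' : θ^2 / (2 * D^2) * D^2 = θ^2 / 2 := by field_simp
    linarith
  have hθ2 : (0:ℝ) < θ^2 := by positivity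
  linarith


theorem statement4 (n N : ℕ) (hn : 1 ≤ n) (hN : 1 ≤ N)
    (A0 : Matrix (Fin N) (Fin N) ℝ) (A : Fin n → Matrix (Fin N) (Fin N) ℝ)
    (L : Matrix (Fin N) (Fin N) ℝ)
    (hA0 : A0.PosDef) (hA0s : A0.IsSymm) (hA : ∀ j, (A j).IsSymm)
    (hL : L.PosSemidef) (hLs : L.IsSymm)
    -- the [SK] hypothesis
    (K : EuclideanSpace ℝ (Fin n) → Matrix (Fin N) (Fin N) ℝ)
    (hKcont : ContinuousOn K (Metric.sphere (0 : EuclideanSpace ℝ (Fin n)) 1))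
    (hKodd : ∀ ω ∈ Metric.sphere (0 : EuclideanSpace ℝ (Fin n)) 1, K (-ω) = -(K ω))
    (hKskew : ∀ ω ∈ Metric.sphere (0 : EuclideanSpace ℝ (Fin n)) 1,
      (K ω * A0).transpose = -(K ω * A0))
    (hKA : ∀ ω ∈ Metric.sphere (0 : EuclideanSpace ℝ (Fin n)) 1,
      (symPart (K ω * ∑ j, ω j • A j) + L).PosDef) :
    ∃ c : ℝ, 0 < c ∧
      ∀ ξ : EuclideanSpace ℝ (Fin n), ξ ≠ 0 →
        ∀ (lam : ℂ) (v : EuclideanSpace ℂ (Fin N)), v ≠ 0 →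
          lam • matC A0 v + Complex.I • matC (∑ j, ξ j • A j) v + matC L v = 0 →
          lam.re ≤ -(c * ‖ξ‖ ^ 2) / (1 + ‖ξ‖ ^ 2) := by
  classical
  obtain ⟨B, hBs, hBL⟩ : ∃ B : Matrix (Fin N) (Fin N) ℝ, B.transpose = B ∧ B * B = L := by
    open scoped MatrixOrder in
    refine ⟨CFC.sqrt L, ?_, CFC.sqrt_mul_sqrt_self L hL.nonneg⟩
    open scoped MatrixOrder in
    have h := (CFC.sqrt_nonneg L).posSemidef.1
    rwa [Matrix.IsHermitian, Matrix.conjTranspose_eq_transpose_of_trivial] at h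
  set Sn := Metric.sphere (0 : EuclideanSpace ℝ (Fin n)) 1 with hSnDef
  set SN := Metric.sphere (0 : EuclideanSpace ℂ (Fin N)) 1 with hSNDef
  have hSnne : Sn.Nonempty := ⟨EuclideanSpace.single ⟨0, hn⟩ 1, by
    simp [hSnDef, mem_sphere_iff_norm, EuclideanSpace.norm_single]⟩
  have hSNne : SN.Nonempty := ⟨EuclideanSpace.single ⟨0, hN⟩ 1, by
    simp [hSNDef, mem_sphere_iff_norm, EuclideanSpace.norm_single]⟩
  have hKent : ∀ i j : Fin N, ContinuousOn (fun ω => K ω i j) Sn := by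
    intro i j
    have hentry : Continuous (fun M : Matrix (Fin N) (Fin N) ℝ => M i j) :=
      (continuous_apply j).comp (continuous_apply i)
    exact hentry.comp_continuousOn hKcont
  -- the constant CK
  have hCKcont : ContinuousOn (fun ω => ∑ i, ∑ j, |K ω i j|) Sn := by
    apply continuousOn_finset_sum
    intro i _
    apply continuousOn_finset_sum
    intro j _
    exact (hKent i j).abs
  obtain ⟨ω₀, hω₀, hCKmax⟩ :=
    (isCompact_sphere (0 : EuclideanSpace ℝ (Fin n)) 1).exists_isMaxOn hSnne hCKcont
  set CK := ∑ i, ∑ j, |K ω₀ i j| with hCKdef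
  have hCK : ∀ ω ∈ Sn, (∑ i, ∑ j, |K ω i j|) ≤ CK := fun ω hω => hCKmax hω
  have hCK0 : 0 ≤ CK := Finset.sum_nonneg fun i _ => Finset.sum_nonneg fun j _ => abs_nonneg _
  set SA0 := ∑ i, ∑ j, |A0 i j| with hSA0def
  have hSA00 : 0 ≤ SA0 := Finset.sum_nonneg fun i _ => Finset.sum_nonneg fun j _ => abs_nonneg _
  set SB := ∑ i, ∑ j, |B i j| with hSBdef
  have hSB0 : 0 ≤ SB := Finset.sum_nonneg fun i _ => Finset.sum_nonneg fun j _ => abs_nonneg _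
  -- the matrix family and its entrywise continuity
  set Mf : EuclideanSpace ℝ (Fin n) → Matrix (Fin N) (Fin N) ℝ :=
    fun ω => symPart (K ω * ∑ m, ω m • A m) + L with hMfdef
  have hX : ∀ i' j' : Fin N,
      ContinuousOn (fun ω' : EuclideanSpace ℝ (Fin n) => (K ω' * ∑ m, ω' m • A m) i' j') Sn := by
    intro i' j'
    have hexp : (fun ω' : EuclideanSpace ℝ (Fin n) => (K ω' * ∑ m, ω' m • A m) i' j')
        = fun ω' => ∑ k, K ω' i' k * ∑ m, ω' m * A m k j' := by
      funext ω'
      rw [Matrix.mul_apply]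
      refine Finset.sum_congr rfl fun k _ => ?_
      congr 1
      simp [Matrix.sum_apply]
    rw [hexp]
    apply continuousOn_finset_sum
    intro k _
    apply ContinuousOn.mul (hKent i' k)
    exact (continuous_finset_sum _ fun m _ =>
      ((continuous_apply m).comp (PiLp.continuous_ofLp (p := 2) (β := fun _ => ℝ))).mul
          continuous_const).continuousOn
  have hMfent : ∀ i j : Fin N, ContinuousOn (fun ω' => Mf ω' i j) Sn := by
    intro i j
    have hexp : (fun ω' => Mf ω' i j) = fun ω' =>
        2⁻¹ * ((K ω' * ∑ m, ω' m • A m) i j + (K ω' * ∑ m, ω' m • A m) j i) + L i j := by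
      funext ω'
      simp only [hMfdef, symPart, Matrix.add_apply, Matrix.smul_apply, Matrix.transpose_apply,
        smul_eq_mul]
      try ring
    rw [hexp]
    exact (continuousOn_const.mul ((hX i j).add (hX j i))).add continuousOn_const
  -- continuity of the quadratic form on the product of spheres
  have hfcont : ContinuousOn (fun p : EuclideanSpace ℝ (Fin n) × EuclideanSpace ℂ (Fin N) =>
      (qf (Mf p.1) p.2).re) (Sn ×ˢ SN) := by
    have hrw : (fun p : EuclideanSpace ℝ (Fin n) × EuclideanSpace ℂ (Fin N) =>
        (qf (Mf p.1) p.2).re) = fun p =>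
        ∑ i, ∑ j, Mf p.1 i j * ((p.2 i).re * (p.2 j).re + (p.2 i).im * (p.2 j).im) := by
      funext p
      exact qf_re' _ _
    rw [hrw]
    apply continuousOn_finset_sum
    intro i _
    apply continuousOn_finset_sum
    intro j _
    apply ContinuousOn.mul
    · exact (hMfent i j).comp continuous_fst.continuousOn (fun p hp => hp.1)
    · apply Continuous.continuousOn
      have hre : ∀ k : Fin N, Continuous fun p :
          EuclideanSpace ℝ (Fin n) × EuclideanSpace ℂ (Fin N) => (p.2 k).re := fun k =>
        Complex.continuous_re.comp (((continuous_apply k).comp (PiLp.continuous_ofLp (p := 2) (β := fun _ => ℂ))).comp continuous_snd)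
      have him : ∀ k : Fin N, Continuous fun p :
          EuclideanSpace ℝ (Fin n) × EuclideanSpace ℂ (Fin N) => (p.2 k).im := fun k =>
        Complex.continuous_im.comp (((continuous_apply k).comp (PiLp.continuous_ofLp (p := 2) (β := fun _ => ℂ))).comp continuous_snd)
      exact ((hre i).mul (hre j)).add ((him i).mul (him j))
  -- the constant θ
  obtain ⟨p₀, hp₀, hpmin⟩ := ((isCompact_sphere (0 : EuclideanSpace ℝ (Fin n)) 1).prod
    (isCompact_sphere (0 : EuclideanSpace ℂ (Fin N)) 1)).exists_isMinOn
    (hSnne.prod hSNne) hfcont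
  have hpmin' : ∀ q : EuclideanSpace ℝ (Fin n) × EuclideanSpace ℂ (Fin N), q.1 ∈ Sn → q.2 ∈ SN →
      (qf (Mf p₀.1) p₀.2).re ≤ (qf (Mf q.1) q.2).re := fun q h1 h2 => hpmin ⟨h1, h2⟩
  set θ := (qf (Mf p₀.1) p₀.2).re with hθdef
  have hp₀2 : (p₀.2 : Fin N → ℂ) ≠ 0 := by
    have h1 : ‖p₀.2‖ = 1 := by
      have := hp₀.2
      rwa [mem_sphere_zero_iff_norm] at this
    intro h0
    rw [show p₀.2 = 0 from by simpa using h0] at h1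
    simp at h1
  have hθpos : 0 < θ := qf_re_pos (hKA p₀.1 hp₀.1) hp₀2
  have hθ : ∀ ω' ∈ Sn, ∀ w : EuclideanSpace ℂ (Fin N), θ * ‖w‖^2 ≤ (qf (Mf ω') w).re := by
    intro ω' hω' w
    rcases eq_or_ne w 0 with h0 | h0
    · rw [h0]
      have : qf (Mf ω') (0 : EuclideanSpace ℂ (Fin N)) = 0 := by
        simp [qf]
      rw [this]
      simp
    · have hwn : (0:ℝ) < ‖w‖ := norm_pos_iff.mpr h0
      set u : EuclideanSpace ℂ (Fin N) := ((‖w‖⁻¹ : ℝ) : ℂ) • w with hudef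
      have huS : u ∈ SN := by
        rw [hSNDef, mem_sphere_zero_iff_norm, hudef, norm_smul]
        simp only [Complex.norm_real, Real.norm_eq_abs]
        rw [abs_of_pos (inv_pos.mpr hwn), inv_mul_cancel₀ hwn.ne']
      have hwu : w = ((‖w‖ : ℝ) : ℂ) • u := by
        rw [hudef, smul_smul]
        norm_cast
        rw [mul_inv_cancel₀ hwn.ne']
        simp
      have hq : (qf (Mf ω') w).re = ‖w‖^2 * (qf (Mf ω') u).re := by
        conv_lhs => rw [hwu]
        rw [WithLp.ofLp_smul, qf_smul_vec]
        rw [show ((‖w‖ : ℝ) : ℂ)^2 * qf (Mf ω') u = ((‖w‖^2 : ℝ) : ℂ) * qf (Mf ω') u by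
          push_cast; ring]
        rw [Complex.re_ofReal_mul]
      rw [hq]
      have hmin : θ ≤ (qf (Mf ω') u).re := hpmin' (ω', u) hω' huS
      nlinarith [sq_nonneg ‖w‖]
  -- choice of c
  set D := SA0 + CK * SA0 + CK * SB * Real.sqrt SA0 + 1 with hDdef
  have hD : 0 < D := by positivity
  have hcpos : (0:ℝ) < min 1 (θ^2 / (2 * D^2)) := lt_min one_pos (by positivity)
  refine ⟨min 1 (θ^2 / (2 * D^2)), hcpos, ?_⟩
  set c := min 1 (θ^2 / (2 * D^2)) with hcdef
  have hc0 : 0 < c := hcpos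
  have hc1 : c ≤ 1 := min_le_left _ _
  have hc2 : c ≤ θ^2 / (2 * D^2) := min_le_right _ _
  clear_value CK SA0 SB θ D c
  intro ξ hξ lam v hv heq
  by_contra hcon
  push_neg at hcon
  set r := ‖ξ‖ with hrdef
  have hr : 0 < r := norm_pos_iff.mpr hξ
  have h1r : (0:ℝ) < 1 + r^2 := by positivity
  have hμlt : -lam.re ≤ c * r^2 / (1 + r^2) := by
    have h' : -(c * r^2) / (1 + r^2) = -(c * r^2 / (1 + r^2)) := by ring
    rw [h'] at hcon
    linarith [hcon]
  set μ := -lam.re with hμdef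
  set ω := (r⁻¹ : ℝ) • ξ with hωdef
  have hωSn : ω ∈ Sn := by
    rw [hSnDef, mem_sphere_zero_iff_norm, hωdef, norm_smul, Real.norm_eq_abs,
      abs_of_pos (inv_pos.mpr hr)]
    exact inv_mul_cancel₀ hr.ne'
  have hωcoord : ∀ m : Fin n, ω m = r⁻¹ * ξ m := fun m => rfl
  have hAxi : (∑ j, ξ j • A j) = r • (∑ m, ω m • A m) := by
    rw [Finset.smul_sum]
    refine Finset.sum_congr rfl fun j _ => ?_
    rw [hωcoord, smul_smul]
    congr 1
    field_simp
  -- the eigenvalue equation, coordinates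
  have hu : (lam • ((A0.map Complex.ofReal).mulVec v)
      + Complex.I • (((∑ j, ξ j • A j).map Complex.ofReal).mulVec v)
      + (L.map Complex.ofReal).mulVec v : Fin N → ℂ) = 0 := by
      have h := congrArg WithLp.ofLp heq
      simpa [matC, Matrix.toEuclideanLin_apply] using h
  -- scalar identity 1
  have htot : lam * qf A0 v + Complex.I * qf (∑ j, ξ j • A j) v + qf L v = 0 := by
    have h := congrArg (fun w : Fin N → ℂ => star (v : Fin N → ℂ) ⬝ᵥ w) hu
    simpa [qf, dotProduct_add, dotProduct_smul, smul_eq_mul] using h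
  set a := (qf A0 v).re with hadef
  set ℓ := (qf L v).re with hldef
  have hIm0 : (qf A0 v).im = 0 := qf_im_of_symm hA0s v
  have hAξsym : (∑ j, ξ j • A j).IsSymm := by
    rw [Matrix.IsSymm, Matrix.transpose_sum]
    exact Finset.sum_congr rfl fun j _ => by rw [Matrix.transpose_smul, (hA j).eq]
  have hImAξ : (qf (∑ j, ξ j • A j) v).im = 0 := qf_im_of_symm hAξsym v
  have h1 : lam.re * a + ℓ = 0 := by
    have h := congrArg Complex.re htot
    simpa [Complex.add_re, Complex.mul_re, hIm0, hImAξ, Complex.I_re, Complex.I_im] using h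
  have ha_pos : 0 < a := qf_re_pos hA0 (fun h => hv (by simpa using h))
  have hl0 : 0 ≤ ℓ := qf_re_nonneg hL v
  have hre0 : lam.re ≤ 0 := by
    by_contra hpos
    push_neg at hpos
    have := mul_pos hpos ha_pos
    linarith [hl0, h1]
  have hμ0 : 0 ≤ μ := by rw [hμdef]; linarith
  have hla : ℓ = μ * a := by rw [hμdef]; linarith [h1]
  -- scalar identity 2
  have hKu : ((K ω).map Complex.ofReal).mulVec (lam • ((A0.map Complex.ofReal).mulVec v)
      + Complex.I • (((∑ j, ξ j • A j).map Complex.ofReal).mulVec v)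
      + (L.map Complex.ofReal).mulVec v) = 0 := by
    rw [hu, Matrix.mulVec_zero]
  have htot2 : lam * qf (K ω * A0) v + Complex.I * qf (K ω * (∑ j, ξ j • A j)) v
      + qf (K ω * L) v = 0 := by
    have h := congrArg (fun w : Fin N → ℂ => star (v : Fin N → ℂ) ⬝ᵥ w) hKu
    simp only [Matrix.mulVec_add, Matrix.mulVec_smul, Matrix.mulVec_mulVec, ← mapC_mul] at h
    simpa [qf, dotProduct_add, dotProduct_smul, smul_eq_mul] using h
  have hskew : (qf (K ω * A0) v).re = 0 := qf_re_of_skew (hKskew ω hωSn) v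
  set β := (qf (K ω * A0) v).im with hβdef
  set ε := (qf (K ω * L) v).im with hεdef
  set α := (qf (K ω * (∑ m, ω m • A m)) v).re with hαdef
  have hAxiK : (qf (K ω * (∑ j, ξ j • A j)) v).re = r * α := by
    rw [hAxi, Matrix.mul_smul, qf_smul]
    simp [Complex.mul_re]
    exact Or.inl rfl
  have h2 : lam.re * β + (r * α + ε) = 0 := by
    have him := congrArg Complex.im htot2
    simp only [Complex.add_im, Complex.mul_im, Complex.I_re, Complex.I_im, Complex.zero_im,
      zero_mul, one_mul, hskew, mul_zero, add_zero, zero_add] at him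
    rw [hAxiK] at him
    linarith [him]
  have hrα : r * α = μ * β - ε := by rw [hμdef]; linarith [h2]
  clear_value μ r ω
  -- bounds
  have htnorm : ∀ i, ‖v i‖ ≤ ‖v‖ := coord_le_norm v
  have hvnn : (0:ℝ) ≤ ‖v‖ := norm_nonneg v
  have hβb : |β| ≤ CK * SA0 * ‖v‖^2 := by
    have hb := dot_bound (K ω * A0) v v ‖v‖ ‖v‖ hvnn hvnn htnorm htnorm
    have habs : |β| ≤ ‖qf (K ω * A0) v‖ := Complex.abs_im_le_norm _
    have hsub : (∑ i, ∑ j, |(K ω * A0) i j|) ≤ CK * SA0 := by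
      refine le_trans (absSum_mul_le _ _) ?_
      rw [← hSA0def]
      exact mul_le_mul_of_nonneg_right (hCK ω hωSn) hSA00
    calc |β| ≤ ‖qf (K ω * A0) v‖ := habs
      _ ≤ (∑ i, ∑ j, |(K ω * A0) i j|) * (‖v‖ * ‖v‖) := hb
      _ ≤ (CK * SA0) * (‖v‖ * ‖v‖) := mul_le_mul_of_nonneg_right hsub (by positivity)
      _ = CK * SA0 * ‖v‖^2 := by ring
  have hab : a ≤ SA0 * ‖v‖^2 := by
    have hb := dot_bound A0 v v ‖v‖ ‖v‖ hvnn hvnn htnorm htnorm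
    have habs : a ≤ ‖qf A0 v‖ := Complex.re_le_norm _
    calc a ≤ ‖qf A0 v‖ := habs
      _ ≤ (∑ i, ∑ j, |A0 i j|) * (‖v‖ * ‖v‖) := hb
      _ = SA0 * ‖v‖^2 := by rw [← hSA0def]; ring
  have hwdef : qf (K ω * L) v
      = star (v : Fin N → ℂ) ⬝ᵥ (((K ω * B).map Complex.ofReal).mulVec
        ((B.map Complex.ofReal).mulVec v)) := by
    have hKL : K ω * L = (K ω * B) * B := by rw [mul_assoc, hBL]
    rw [qf, hKL, mapC_mul, ← Matrix.mulVec_mulVec]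
  have hwcoord : ∀ jj, ‖(B.map Complex.ofReal).mulVec v jj‖ ≤ Real.sqrt ℓ := by
    intro jj
    have h1' := abs_coord_le ((B.map Complex.ofReal).mulVec v) jj
    have h2' : (star ((B.map Complex.ofReal).mulVec v)
        ⬝ᵥ ((B.map Complex.ofReal).mulVec v)).re = ℓ := by
      rw [← starw B hBs v, hBL, hldef]
      rfl
    rwa [h2'] at h1'
  have hεb : |ε| ≤ CK * SB * (‖v‖ * Real.sqrt ℓ) := by
    have hl0' : (0:ℝ) ≤ Real.sqrt ℓ := Real.sqrt_nonneg _
    have hb := dot_bound (K ω * B) v ((B.map Complex.ofReal).mulVec v) ‖v‖ (Real.sqrt ℓ)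
      hvnn hl0' htnorm hwcoord
    have habs : |ε| ≤ ‖qf (K ω * L) v‖ := Complex.abs_im_le_norm _
    rw [hwdef] at habs
    have hsub : (∑ i, ∑ j, |(K ω * B) i j|) ≤ CK * SB := by
      refine le_trans (absSum_mul_le _ _) ?_
      rw [← hSBdef]
      exact mul_le_mul_of_nonneg_right (hCK ω hωSn) hSB0
    calc |ε| ≤ (∑ i, ∑ j, |(K ω * B) i j|) * (‖v‖ * Real.sqrt ℓ) := le_trans habs hb
      _ ≤ CK * SB * (‖v‖ * Real.sqrt ℓ) :=
        mul_le_mul_of_nonneg_right hsub (by positivity)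
  have hθv := hθ ω hωSn v
  have hMfre : (qf (Mf ω) v).re = α + ℓ := by
    show (qf (symPart (K ω * ∑ m, ω m • A m) + L) v).re = α + ℓ
    rw [qf_add, Complex.add_re, qf_re_symPart, hαdef, hldef]
  have hθv2 : θ * ‖v‖^2 ≤ α + ℓ := by rw [hMfre] at hθv; exact hθv
  have hdiv : θ * r ≤ μ * (CK * SA0) + CK * SB * (Real.sqrt μ * Real.sqrt SA0) + μ * SA0 * r :=
    arith_key θ r μ a ℓ β ε α CK SA0 SB ‖v‖ (norm_pos_iff.mpr hv) hr hμ0 hCK0 hSA00 hSB0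
      hla hab hβb hεb hθv2 hrα
  exact arith_main θ D CK SA0 SB c r μ hθpos hCK0 hSA00 hSB0 hDdef hc0 hc1 hc2 hr hμ0 hμlt hdiv
end

section
/- Let n, N ≥ 1 and let A⁰, A¹, …, Aⁿ, L be real N×N matrices with A⁰ symmetric positive definite, each A^j symmetric, and L symmetric positive semidefinite. Suppose that for every ξ ∈ ℝⁿ with ξ ≠ 0, every λ ∈ ℂ with det(λ A⁰ + i A(ξ) + L) = 0 satisfies Re λ < 0. Then the stability condition holds: if φ ∈ ℝ^N satisfies L φ = 0 and (λ A⁰ + A(ω)) φ = 0 for some λ ∈ ℝ and some ω ∈ S^{n−1}, then φ = 0. -/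
open Matrix

theorem statement5 (n N : ℕ) (hn : 1 ≤ n) (hN : 1 ≤ N)
    (A0 : Matrix (Fin N) (Fin N) ℝ) (A : Fin n → Matrix (Fin N) (Fin N) ℝ)
    (L : Matrix (Fin N) (Fin N) ℝ)
    (hA0 : A0.PosDef) (hA0s : A0.IsSymm) (hA : ∀ j, (A j).IsSymm)
    (hL : L.PosSemidef) (hLs : L.IsSymm)
    (hspec : ∀ ξ : EuclideanSpace ℝ (Fin n), ξ ≠ 0 → ∀ lam : ℂ,
      (lam • A0.map (Complex.ofReal)
        + Complex.I • ((∑ j, ξ j • A j).map (Complex.ofReal))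
        + L.map (Complex.ofReal)).det = 0 → lam.re < 0) :
    ∀ (φ : Fin N → ℝ) (lam : ℝ) (ω : EuclideanSpace ℝ (Fin n)),
      ω ∈ Metric.sphere (0 : EuclideanSpace ℝ (Fin n)) 1 →
      L.mulVec φ = 0 →
      (lam • A0 + ∑ j, ω j • A j).mulVec φ = 0 →
      φ = 0 := by
  intro φ lam ω hω hLφ heq
  by_contra hφ
  have hωne : ω ≠ 0 := by
    intro h; rw [h] at hω; simp at hω
  set φc : Fin N → ℂ := fun i => (φ i : ℂ) with hφc
  have hφcne : φc ≠ 0 := by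
    intro h
    apply hφ
    funext i
    have := congrFun h i
    simpa [hφc] using this
  have hmap : ∀ (M : Matrix (Fin N) (Fin N) ℝ) (i : Fin N),
      (M.map Complex.ofReal).mulVec φc i = ((M.mulVec φ i : ℝ) : ℂ) := by
    intro M i
    simp [Matrix.mulVec, dotProduct, Matrix.map_apply, hφc]
  set S := ∑ j, ω j • A j with hS
  have hSφ : S.mulVec φ = -(lam • A0.mulVec φ) := by
    rw [Matrix.add_mulVec, Matrix.smul_mulVec] at heq
    exact eq_neg_of_add_eq_zero_right heq
  set lamc : ℂ := Complex.I * lam with hlamc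
  set M : Matrix (Fin N) (Fin N) ℂ :=
    lamc • A0.map Complex.ofReal + Complex.I • (S.map Complex.ofReal)
      + L.map Complex.ofReal with hM
  have hker : M.mulVec φc = 0 := by
    funext i
    have h1 := hmap A0 i
    have h2 := hmap S i
    have h3 := hmap L i
    rw [hM]
    simp only [Matrix.add_mulVec, Matrix.smul_mulVec, Pi.add_apply,
      Pi.smul_apply, smul_eq_mul, h1, h2, h3, hSφ, hLφ]
    simp only [Pi.neg_apply, Pi.smul_apply, smul_eq_mul, Pi.zero_apply]
    push_cast
    ring
  have hdet : M.det = 0 := by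
    rw [Matrix.exists_mulVec_eq_zero_iff.symm]
    exact ⟨φc, hφcne, hker⟩
  have := hspec ω hωne lamc hdet
  rw [hlamc] at this
  simp [Complex.mul_re] at this
end

section
/- Let n ≥ 1, k ≥ 0 and m, ϱ > 0, and set θ := (ϱ + k)/(ϱ + k + m). Then there exists a constant C > 0, depending only on n, k, m, ϱ, such that for every measurable u : ℝⁿ → ℂ, (∫_{ℝⁿ} |ξ|^{2k} |u(ξ)|² dξ)^{1/2} ≤ C (∫_{ℝⁿ} |ξ|^{2(k+m)} |u(ξ)|² dξ)^{θ/2} · ( sup_{r>0} r^{−ϱ} ( ∫_{r ≤ |ξ| < 2r} |u(ξ)|² dξ )^{1/2} )^{1−θ}, where both sides are interpreted as values in [0,∞]. -/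
open scoped ENNReal
open MeasureTheory Set

private lemma dyadic_exists {t : ℝ} (h0 : 0 < t) (h1 : t < 1) :
    ∃ j : ℕ, (1/2 : ℝ) ^ (j+1) ≤ t ∧ t < (1/2 : ℝ) ^ j := by
  classical
  have hex : ∃ j : ℕ, (1/2 : ℝ) ^ (j+1) ≤ t := by
    obtain ⟨nn, hnn⟩ := exists_pow_lt_of_lt_one h0 (by norm_num : (1/2:ℝ) < 1)
    refine ⟨nn, ?_⟩
    have h2 : (1/2:ℝ)^(nn+1) ≤ (1/2:ℝ)^nn :=
      pow_le_pow_of_le_one (by norm_num) (by norm_num) (by omega)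
    linarith
  refine ⟨Nat.find hex, Nat.find_spec hex, ?_⟩
  by_cases h0' : Nat.find hex = 0
  · rw [h0']; simpa using h1
  · have hlt := Nat.find_min hex (m := Nat.find hex - 1) (by omega)
    push_neg at hlt
    have e : Nat.find hex - 1 + 1 = Nat.find hex := by omega
    rwa [e] at hlt

private lemma pow_rpow_comm {a : ℝ} (ha : 0 ≤ a) (e : ℝ) (j : ℕ) :
    (a ^ j) ^ e = (a ^ e) ^ j := by
  rw [← Real.rpow_natCast a j, ← Real.rpow_mul ha, mul_comm, Real.rpow_mul ha,
    Real.rpow_natCast]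

private lemma annC {k ϱ R : ℝ} (hR : 0 < R) (j : ℕ) :
    (R * (1/2:ℝ)^j) ^ (2*k) * (R * (1/2:ℝ)^(j+1)) ^ (2*ϱ)
      = (R ^ (2*(k+ϱ)) * (1/2:ℝ) ^ (2*ϱ)) * ((1/2:ℝ) ^ (2*(k+ϱ))) ^ j := by
  have h2 : (0:ℝ) ≤ 1/2 := by norm_num
  rw [Real.mul_rpow hR.le (pow_nonneg h2 _), Real.mul_rpow hR.le (pow_nonneg h2 _),
    pow_rpow_comm h2, pow_rpow_comm h2, pow_succ]
  have e1 : R ^ (2*(k+ϱ)) = R ^ (2*k) * R ^ (2*ϱ) := by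
    rw [← Real.rpow_add hR]; ring_nf
  have e2 : ((1/2:ℝ) ^ (2*(k+ϱ))) ^ j = ((1/2:ℝ) ^ (2*k)) ^ j * ((1/2:ℝ) ^ (2*ϱ)) ^ j := by
    rw [← mul_pow, ← Real.rpow_add (by norm_num : (0:ℝ) < 1/2)]; ring_nf
  rw [e1, e2]; ring

private lemma opt_algebra {k m ϱ b μ : ℝ} (hm : 0 < m) (hs : 0 < ϱ + k + m)
    (hb : 0 < b) (hμ : 0 < μ) :
    ∃ R : ℝ, 0 < R ∧
      R ^ (-(2*m)) * b = b ^ ((ϱ+k)/(ϱ+k+m)) * μ ^ (2*(1 - (ϱ+k)/(ϱ+k+m))) ∧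
      R ^ (2*(k+ϱ)) * μ ^ (2:ℕ) = b ^ ((ϱ+k)/(ϱ+k+m)) * μ ^ (2*(1 - (ϱ+k)/(ϱ+k+m))) := by
  set s := ϱ + k + m with hsdef
  have hsne : s ≠ 0 := ne_of_gt hs
  have hμ2 : (0:ℝ) < μ ^ (2:ℝ) := Real.rpow_pos_of_pos hμ _
  have ht : (0:ℝ) < b / μ ^ (2:ℝ) := div_pos hb hμ2
  refine ⟨(b / μ ^ (2:ℝ)) ^ (1/(2*s)), Real.rpow_pos_of_pos ht _, ?_, ?_⟩
  · have hRe : ∀ e : ℝ, ((b / μ ^ (2:ℝ)) ^ (1/(2*s))) ^ e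
        = b ^ (e/(2*s)) * μ ^ (-(e/s)) := by
      intro e
      rw [← Real.rpow_mul ht.le, Real.div_rpow hb.le hμ2.le, ← Real.rpow_mul hμ.le,
        div_eq_mul_inv, ← Real.rpow_neg hμ.le]
      congr 1
      · congr 1; field_simp
      · congr 1; field_simp
    rw [hRe]
    have e1 : b ^ (-(2*m)/(2*s)) * b = b ^ (-(2*m)/(2*s) + 1) := by
      rw [Real.rpow_add hb, Real.rpow_one]
    calc b ^ (-(2*m)/(2*s)) * μ ^ (-(-(2*m)/s)) * b
        = b ^ (-(2*m)/(2*s)) * b * μ ^ (-(-(2*m)/s)) := by ring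
      _ = b ^ (-(2*m)/(2*s) + 1) * μ ^ (-(-(2*m)/s)) := by rw [e1]
      _ = b ^ ((ϱ+k)/s) * μ ^ (2*(1 - (ϱ+k)/s)) := by
          congr 1
          · congr 1; field_simp; ring
          · congr 1; field_simp; ring
  · have hRe : ∀ e : ℝ, ((b / μ ^ (2:ℝ)) ^ (1/(2*s))) ^ e
        = b ^ (e/(2*s)) * μ ^ (-(e/s)) := by
      intro e
      rw [← Real.rpow_mul ht.le, Real.div_rpow hb.le hμ2.le, ← Real.rpow_mul hμ.le,
        div_eq_mul_inv, ← Real.rpow_neg hμ.le]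
      congr 1
      · congr 1; field_simp
      · congr 1; field_simp
    rw [hRe]
    have e2 : μ ^ (-(2*(k+ϱ)/s)) * μ ^ (2:ℕ) = μ ^ (-(2*(k+ϱ)/s) + 2) := by
      rw [Real.rpow_add hμ, ← Real.rpow_natCast μ 2]; norm_num
    calc b ^ (2*(k+ϱ)/(2*s)) * μ ^ (-(2*(k+ϱ)/s)) * μ ^ (2:ℕ)
        = b ^ (2*(k+ϱ)/(2*s)) * (μ ^ (-(2*(k+ϱ)/s)) * μ ^ (2:ℕ)) := by ring
      _ = b ^ (2*(k+ϱ)/(2*s)) * μ ^ (-(2*(k+ϱ)/s) + 2) := by rw [e2]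
      _ = b ^ ((ϱ+k)/s) * μ ^ (2*(1 - (ϱ+k)/s)) := by
          congr 1
          · congr 1; field_simp; ring
          · congr 1; field_simp; ring

set_option maxHeartbeats 1000000 in
theorem statement9 (n : ℕ) (hn : 1 ≤ n) (k m ϱ : ℝ) (hk : 0 ≤ k) (hm : 0 < m) (hϱ : 0 < ϱ) :
    ∃ C : ℝ, 0 < C ∧ ∀ u : EuclideanSpace ℝ (Fin n) → ℂ, Measurable u →
      (∫⁻ ξ, ENNReal.ofReal (‖ξ‖ ^ (2 * k) * ‖u ξ‖ ^ 2)) ^ ((1 : ℝ) / 2)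
        ≤ ENNReal.ofReal C
          * (∫⁻ ξ, ENNReal.ofReal (‖ξ‖ ^ (2 * (k + m)) * ‖u ξ‖ ^ 2))
              ^ (((ϱ + k) / (ϱ + k + m)) / 2)
          * (⨆ r : {r : ℝ // 0 < r},
              ENNReal.ofReal ((r : ℝ) ^ (-ϱ))
                * (∫⁻ ξ in {ξ : EuclideanSpace ℝ (Fin n) | (r : ℝ) ≤ ‖ξ‖ ∧ ‖ξ‖ < 2 * (r : ℝ)},
                    ENNReal.ofReal (‖u ξ‖ ^ 2)) ^ ((1 : ℝ) / 2))
            ^ (1 - (ϱ + k) / (ϱ + k + m)) := by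
  classical
  have hn' : Nonempty (Fin n) := ⟨⟨0, hn⟩⟩
  haveI hnt : Nontrivial (EuclideanSpace ℝ (Fin n)) := by
    exact nontrivial_of_ne (EuclideanSpace.single ⟨0, hn⟩ (1:ℝ)) 0 (by
      intro h; have := congrArg (fun v => v ⟨0, hn⟩) h; simp at this)
  set θ := (ϱ + k) / (ϱ + k + m) with hθdef
  have hs : 0 < ϱ + k + m := by linarith
  have hθpos : 0 < θ := div_pos (by linarith) hs
  have hθlt : θ < 1 := (div_lt_one hs).2 (by linarith)
  have hq0 : (0:ℝ) < (1/2:ℝ) ^ (2*(k+ϱ)) := Real.rpow_pos_of_pos (by norm_num) _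
  have hqlt : ((1/2:ℝ)) ^ (2*(k+ϱ)) < 1 :=
    Real.rpow_lt_one (by norm_num) (by norm_num) (by linarith)
  set C₀ : ℝ := (1/2:ℝ) ^ (2*ϱ) * (1 - (1/2:ℝ) ^ (2*(k+ϱ)))⁻¹ with hC₀def
  have hC₀pos : 0 < C₀ :=
    mul_pos (Real.rpow_pos_of_pos (by norm_num) _) (inv_pos.2 (by linarith))
  refine ⟨(1 + C₀) ^ ((1:ℝ)/2), Real.rpow_pos_of_pos (by linarith) _, ?_⟩
  intro u hu
  set g : EuclideanSpace ℝ (Fin n) → ℝ≥0∞ := fun ξ => ENNReal.ofReal (‖ξ‖ ^ (2 * k) * ‖u ξ‖ ^ 2) with hg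
  set A := ∫⁻ ξ, g ξ with hA
  set Bq := ∫⁻ ξ : EuclideanSpace ℝ (Fin n), ENNReal.ofReal (‖ξ‖ ^ (2 * (k + m)) * ‖u ξ‖ ^ 2) with hBq
  set Msup := ⨆ r : {r : ℝ // 0 < r},
      ENNReal.ofReal ((r : ℝ) ^ (-ϱ))
        * (∫⁻ ξ in {ξ : EuclideanSpace ℝ (Fin n) | (r : ℝ) ≤ ‖ξ‖ ∧ ‖ξ‖ < 2 * (r : ℝ)},
            ENNReal.ofReal (‖u ξ‖ ^ 2)) ^ ((1 : ℝ) / 2) with hMsup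
  -- measurability facts
  have hmeas1 : Measurable fun ξ : EuclideanSpace ℝ (Fin n) => ENNReal.ofReal (‖u ξ‖ ^ 2) :=
    (hu.norm.pow_const 2).ennreal_ofReal
  have hmeasB : Measurable fun ξ : EuclideanSpace ℝ (Fin n) => ENNReal.ofReal (‖ξ‖ ^ (2 * (k + m)) * ‖u ξ‖ ^ 2) :=
    ((measurable_norm.pow_const (2*(k+m))).mul (hu.norm.pow_const 2)).ennreal_ofReal
  have measAnn : ∀ r : ℝ, MeasurableSet {ξ : EuclideanSpace ℝ (Fin n) | r ≤ ‖ξ‖ ∧ ‖ξ‖ < 2*r} := by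
    intro r
    exact measurable_norm (measurableSet_Ico : MeasurableSet (Set.Ico r (2*r)))
  have hzero : (volume : Measure (EuclideanSpace ℝ (Fin n))) {0} = 0 := measure_singleton 0
  have hae0 : ∀ᵐ ξ : EuclideanSpace ℝ (Fin n), ξ ≠ 0 := by
    rw [ae_iff]
    convert hzero using 2
    simp
  -- annulus bound
  have hannb : ∀ r : ℝ, 0 < r →
      (∫⁻ ξ in {ξ : EuclideanSpace ℝ (Fin n) | r ≤ ‖ξ‖ ∧ ‖ξ‖ < 2*r}, ENNReal.ofReal (‖u ξ‖ ^ 2))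
        ≤ ENNReal.ofReal (r ^ (2*ϱ)) * Msup ^ 2 := by
    intro r hr
    set I := ∫⁻ ξ in {ξ : EuclideanSpace ℝ (Fin n) | r ≤ ‖ξ‖ ∧ ‖ξ‖ < 2*r}, ENNReal.ofReal (‖u ξ‖ ^ 2) with hI
    have h1 : ENNReal.ofReal (r ^ (-ϱ)) * I ^ ((1:ℝ)/2) ≤ Msup := by
      rw [hMsup]
      exact le_iSup (fun rr : {r : ℝ // 0 < r} =>
        ENNReal.ofReal ((rr : ℝ) ^ (-ϱ))
          * (∫⁻ ξ in {ξ : EuclideanSpace ℝ (Fin n) | (rr : ℝ) ≤ ‖ξ‖ ∧ ‖ξ‖ < 2 * (rr : ℝ)},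
              ENNReal.ofReal (‖u ξ‖ ^ 2)) ^ ((1 : ℝ) / 2)) ⟨r, hr⟩
    have h2 : I ^ ((1:ℝ)/2) = ENNReal.ofReal (r ^ ϱ) *
        (ENNReal.ofReal (r ^ (-ϱ)) * I ^ ((1:ℝ)/2)) := by
      rw [← mul_assoc, ← ENNReal.ofReal_mul (Real.rpow_nonneg hr.le _),
        ← Real.rpow_add hr]
      norm_num
    have h3 : I ^ ((1:ℝ)/2) ≤ ENNReal.ofReal (r ^ ϱ) * Msup := by
      rw [h2]; exact mul_le_mul_right h1 _
    have h4 : I = (I ^ ((1:ℝ)/2)) ^ (2:ℕ) := by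
      rw [← ENNReal.rpow_natCast, ← ENNReal.rpow_mul]
      norm_num
    calc I = (I ^ ((1:ℝ)/2)) ^ (2:ℕ) := h4
      _ ≤ (ENNReal.ofReal (r ^ ϱ) * Msup) ^ (2:ℕ) := pow_le_pow_left' h3 2
      _ = ENNReal.ofReal (r ^ ϱ) ^ (2:ℕ) * Msup ^ (2:ℕ) := by rw [mul_pow]
      _ = ENNReal.ofReal (r ^ (2*ϱ)) * Msup ^ 2 := by
          rw [← ENNReal.ofReal_pow (Real.rpow_nonneg hr.le _)]
          congr 2
          rw [← Real.rpow_natCast (r ^ ϱ) 2, ← Real.rpow_mul hr.le]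
          norm_num; ring_nf
  -- key inequality
  have key : ∀ R : ℝ, 0 < R →
      A ≤ ENNReal.ofReal (R ^ (-(2*m))) * Bq
          + ENNReal.ofReal (C₀ * R ^ (2*(k+ϱ))) * Msup ^ 2 := by
    intro R hR
    set S := {ξ : EuclideanSpace ℝ (Fin n) | ‖ξ‖ < R} with hS
    have hSmeas : MeasurableSet S :=
      measurable_norm (measurableSet_Iio : MeasurableSet (Set.Iio R))
    have hsplit : A = (∫⁻ ξ in S, g ξ) + ∫⁻ ξ in Sᶜ, g ξ :=
      (lintegral_add_compl g hSmeas).symm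
    -- high part
    have hhigh : (∫⁻ ξ in Sᶜ, g ξ) ≤ ENNReal.ofReal (R ^ (-(2*m))) * Bq := by
      have hpt : ∀ ξ ∈ Sᶜ, g ξ ≤
          ENNReal.ofReal (R ^ (-(2*m))) * ENNReal.ofReal (‖ξ‖ ^ (2*(k+m)) * ‖u ξ‖ ^ 2) := by
        intro ξ hξmem
        have hmem : R ≤ ‖ξ‖ := not_lt.1 hξmem
        have hξ : 0 < ‖ξ‖ := lt_of_lt_of_le hR hmem
        rw [← ENNReal.ofReal_mul (Real.rpow_nonneg (by positivity) _)]
        apply ENNReal.ofReal_le_ofReal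
        rw [← mul_assoc]
        apply mul_le_mul_of_nonneg_right _ (sq_nonneg _)
        have edec : (2*(k+m)) = 2*m + 2*k := by ring
        rw [edec, Real.rpow_add hξ, Real.rpow_neg hR.le, ← mul_assoc]
        have h2 : R ^ (2*m) ≤ ‖ξ‖ ^ (2*m) := Real.rpow_le_rpow hR.le hmem (by linarith)
        have h3 : (0:ℝ) < R ^ (2*m) := Real.rpow_pos_of_pos hR _
        have h4 : (0:ℝ) ≤ ‖ξ‖ ^ (2*k) := Real.rpow_nonneg hξ.le _
        have h5 : (1:ℝ) ≤ (R ^ (2*m))⁻¹ * ‖ξ‖ ^ (2*m) := by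
          rw [inv_mul_eq_div, le_div_iff₀ h3, one_mul]; exact h2
        nlinarith
      calc (∫⁻ ξ in Sᶜ, g ξ)
          ≤ ∫⁻ ξ in Sᶜ, ENNReal.ofReal (R ^ (-(2*m)))
              * ENNReal.ofReal (‖ξ‖ ^ (2*(k+m)) * ‖u ξ‖ ^ 2) :=
            setLIntegral_mono (hmeasB.const_mul _) hpt
        _ = ENNReal.ofReal (R ^ (-(2*m)))
              * ∫⁻ ξ in Sᶜ, ENNReal.ofReal (‖ξ‖ ^ (2*(k+m)) * ‖u ξ‖ ^ 2) :=
            lintegral_const_mul' _ _ ENNReal.ofReal_ne_top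
        _ ≤ ENNReal.ofReal (R ^ (-(2*m))) * Bq :=
            mul_le_mul_right (setLIntegral_le_lintegral _ _) _
    -- low part
    have hlow : (∫⁻ ξ in S, g ξ) ≤ ENNReal.ofReal (C₀ * R ^ (2*(k+ϱ))) * Msup ^ 2 := by
      set AnnS : ℕ → Set (EuclideanSpace ℝ (Fin n)) := fun j =>
        {ξ : EuclideanSpace ℝ (Fin n) | R * (1/2:ℝ)^(j+1) ≤ ‖ξ‖ ∧ ‖ξ‖ < 2 * (R * (1/2:ℝ)^(j+1))} with hAnnS
      have hcov : S ⊆ {(0 : EuclideanSpace ℝ (Fin n))} ∪ ⋃ j : ℕ, AnnS j := by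
        intro ξ hξmem
        by_cases h0 : ξ = 0
        · left; simp [h0]
        · right
          have hξn : 0 < ‖ξ‖ := norm_pos_iff.2 h0
          have hξR : ‖ξ‖ < R := hξmem
          have ht1 : ‖ξ‖ / R < 1 := (div_lt_one hR).2 hξR
          obtain ⟨j, hj1, hj2⟩ := dyadic_exists (div_pos hξn hR) ht1
          refine Set.mem_iUnion.2 ⟨j, ?_, ?_⟩
          · have := (le_div_iff₀ hR).1 hj1
            linarith [this]
          · have h6 := (div_lt_iff₀ hR).1 hj2
            have h7 : (1/2:ℝ)^(j+1) = (1/2:ℝ)^j * (1/2) := pow_succ _ _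
            nlinarith
      have hperann : ∀ j : ℕ, (∫⁻ ξ in AnnS j, g ξ)
          ≤ ENNReal.ofReal ((R * (1/2:ℝ)^j) ^ (2*k) * (R * (1/2:ℝ)^(j+1)) ^ (2*ϱ))
              * Msup ^ 2 := by
        intro j
        have hrj : 0 < R * (1/2:ℝ)^(j+1) := by positivity
        have hub : ∀ ξ ∈ AnnS j, g ξ ≤
            ENNReal.ofReal ((R * (1/2:ℝ)^j) ^ (2*k)) * ENNReal.ofReal (‖u ξ‖ ^ 2) := by
          intro ξ hξmem
          obtain ⟨hl, hr2⟩ := hξmem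
          rw [hg, ← ENNReal.ofReal_mul (Real.rpow_nonneg (by positivity) _)]
          apply ENNReal.ofReal_le_ofReal
          apply mul_le_mul_of_nonneg_right _ (sq_nonneg _)
          have hub2 : ‖ξ‖ ≤ R * (1/2:ℝ)^j := by
            have h7 : (1/2:ℝ)^(j+1) = (1/2:ℝ)^j * (1/2) := pow_succ _ _
            nlinarith
          exact Real.rpow_le_rpow (norm_nonneg _) hub2 (by linarith)
        calc (∫⁻ ξ in AnnS j, g ξ)
            ≤ ∫⁻ ξ in AnnS j, ENNReal.ofReal ((R * (1/2:ℝ)^j) ^ (2*k))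
                * ENNReal.ofReal (‖u ξ‖ ^ 2) :=
              setLIntegral_mono (hmeas1.const_mul _) hub
          _ = ENNReal.ofReal ((R * (1/2:ℝ)^j) ^ (2*k))
                * ∫⁻ ξ in AnnS j, ENNReal.ofReal (‖u ξ‖ ^ 2) :=
              lintegral_const_mul' _ _ ENNReal.ofReal_ne_top
          _ ≤ ENNReal.ofReal ((R * (1/2:ℝ)^j) ^ (2*k))
                * (ENNReal.ofReal ((R * (1/2:ℝ)^(j+1)) ^ (2*ϱ)) * Msup ^ 2) :=
              mul_le_mul_right (hannb _ hrj) _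
          _ = ENNReal.ofReal ((R * (1/2:ℝ)^j) ^ (2*k) * (R * (1/2:ℝ)^(j+1)) ^ (2*ϱ))
                * Msup ^ 2 := by
              rw [← mul_assoc, ← ENNReal.ofReal_mul (Real.rpow_nonneg (by positivity) _)]
      have htsum : (∑' j : ℕ, ENNReal.ofReal ((R * (1/2:ℝ)^j) ^ (2*k)
            * (R * (1/2:ℝ)^(j+1)) ^ (2*ϱ)) * Msup ^ 2)
          = ENNReal.ofReal (C₀ * R ^ (2*(k+ϱ))) * Msup ^ 2 := by
        have hterm : ∀ j : ℕ, ENNReal.ofReal ((R * (1/2:ℝ)^j) ^ (2*k)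
              * (R * (1/2:ℝ)^(j+1)) ^ (2*ϱ))
            = ENNReal.ofReal (R ^ (2*(k+ϱ)) * (1/2:ℝ) ^ (2*ϱ))
                * (ENNReal.ofReal ((1/2:ℝ) ^ (2*(k+ϱ)))) ^ j := by
          intro j
          rw [annC hR j, ENNReal.ofReal_mul (by positivity),
            ENNReal.ofReal_pow hq0.le]
        calc (∑' j : ℕ, ENNReal.ofReal ((R * (1/2:ℝ)^j) ^ (2*k)
              * (R * (1/2:ℝ)^(j+1)) ^ (2*ϱ)) * Msup ^ 2)
            = (∑' j : ℕ, ENNReal.ofReal (R ^ (2*(k+ϱ)) * (1/2:ℝ) ^ (2*ϱ))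
                * (ENNReal.ofReal ((1/2:ℝ) ^ (2*(k+ϱ)))) ^ j) * Msup ^ 2 := by
              rw [← ENNReal.tsum_mul_right]
              congr 1; funext j; rw [hterm j]
          _ = ENNReal.ofReal (R ^ (2*(k+ϱ)) * (1/2:ℝ) ^ (2*ϱ))
                * (1 - ENNReal.ofReal ((1/2:ℝ) ^ (2*(k+ϱ))))⁻¹ * Msup ^ 2 := by
              rw [ENNReal.tsum_mul_left, ENNReal.tsum_geometric]
          _ = ENNReal.ofReal (C₀ * R ^ (2*(k+ϱ))) * Msup ^ 2 := by
              congr 1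
              have e8 : (1:ℝ≥0∞) - ENNReal.ofReal ((1/2:ℝ) ^ (2*(k+ϱ)))
                  = ENNReal.ofReal (1 - (1/2:ℝ) ^ (2*(k+ϱ))) := by
                rw [ENNReal.ofReal_sub _ hq0.le, ENNReal.ofReal_one]
              rw [e8, ← ENNReal.ofReal_inv_of_pos (by linarith),
                ← ENNReal.ofReal_mul (by positivity)]
              congr 1
              rw [hC₀def]; ring
      calc (∫⁻ ξ in S, g ξ)
          ≤ ∫⁻ ξ in {(0 : EuclideanSpace ℝ (Fin n))} ∪ ⋃ j : ℕ, AnnS j, g ξ := lintegral_mono_set hcov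
        _ ≤ (∫⁻ ξ in {(0 : EuclideanSpace ℝ (Fin n))}, g ξ) + ∫⁻ ξ in ⋃ j : ℕ, AnnS j, g ξ :=
            lintegral_union_le _ _ _
        _ = ∫⁻ ξ in ⋃ j : ℕ, AnnS j, g ξ := by
            rw [setLIntegral_measure_zero _ _ hzero, zero_add]
        _ ≤ ∑' j : ℕ, ∫⁻ ξ in AnnS j, g ξ := lintegral_iUnion_le _ _
        _ ≤ ∑' j : ℕ, ENNReal.ofReal ((R * (1/2:ℝ)^j) ^ (2*k)
              * (R * (1/2:ℝ)^(j+1)) ^ (2*ϱ)) * Msup ^ 2 :=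
            ENNReal.tsum_le_tsum hperann
        _ = ENNReal.ofReal (C₀ * R ^ (2*(k+ϱ))) * Msup ^ 2 := htsum
    rw [hsplit]
    rw [add_comm]
    exact add_le_add hhigh hlow
  -- degenerate cases
  have hA0 : (Bq = 0 ∨ Msup = 0) → A = 0 := by
    intro hcase
    have hgz : g =ᵐ[volume] 0 := by
      rcases hcase with hB0 | hM0
      · have := (lintegral_eq_zero_iff hmeasB).1 hB0
        filter_upwards [this, hae0] with ξ h1 h2
        have hξ : 0 < ‖ξ‖ := norm_pos_iff.2 h2
        have h3 : ‖ξ‖ ^ (2*(k+m)) * ‖u ξ‖ ^ 2 ≤ 0 := by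
          by_contra h4
          push_neg at h4
          simp only [Pi.zero_apply] at h1
          rw [ENNReal.ofReal_eq_zero] at h1
          linarith
        have h5 : 0 < ‖ξ‖ ^ (2*(k+m)) := Real.rpow_pos_of_pos hξ _
        have h6 : ‖u ξ‖ ^ 2 ≤ 0 := by nlinarith
        have h7 : ‖u ξ‖ = 0 := by nlinarith [sq_nonneg ‖u ξ‖, norm_nonneg (u ξ)]
        simp only [hg, Pi.zero_apply]
        rw [h7]
        norm_num
      · have hann0 : ∀ i : ℤ, (∫⁻ ξ in {ξ : EuclideanSpace ℝ (Fin n) | (2:ℝ)^i ≤ ‖ξ‖ ∧ ‖ξ‖ < 2*(2:ℝ)^i},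
            ENNReal.ofReal (‖u ξ‖ ^ 2)) = 0 := by
          intro i
          have h1 := hannb ((2:ℝ)^i) (zpow_pos (by norm_num) i)
          rw [hM0] at h1
          simpa using h1
        have hae2 : ∀ᵐ ξ : EuclideanSpace ℝ (Fin n), ∀ i : ℤ,
            ξ ∈ {ξ : EuclideanSpace ℝ (Fin n) | (2:ℝ)^i ≤ ‖ξ‖ ∧ ‖ξ‖ < 2*(2:ℝ)^i} →
              ENNReal.ofReal (‖u ξ‖ ^ 2) = 0 := by
          rw [ae_all_iff]
          intro i
          exact (setLIntegral_eq_zero_iff (measAnn _) hmeas1).1 (hann0 i)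
        filter_upwards [hae2, hae0] with ξ h1 h2
        have hξ : 0 < ‖ξ‖ := norm_pos_iff.2 h2
        obtain ⟨i, hi1, hi2⟩ := exists_mem_Ico_zpow hξ (by norm_num : (1:ℝ) < 2)
        have hmem : ξ ∈ {ξ : EuclideanSpace ℝ (Fin n) | (2:ℝ)^i ≤ ‖ξ‖ ∧ ‖ξ‖ < 2*(2:ℝ)^i} := by
          refine ⟨hi1, ?_⟩
          have : (2:ℝ)^(i+1) = 2^i * 2 := zpow_add_one₀ (by norm_num) i
          rw [this] at hi2; linarith
        have h3 := h1 i hmem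
        rw [ENNReal.ofReal_eq_zero] at h3
        have h7 : ‖u ξ‖ = 0 := by nlinarith [sq_nonneg ‖u ξ‖, norm_nonneg (u ξ)]
        simp only [hg, Pi.zero_apply]
        rw [h7]
        norm_num
    rw [hA, lintegral_congr_ae hgz]; simp
  -- case analysis
  by_cases hB0 : Bq = 0
  · rw [hA0 (Or.inl hB0), ENNReal.zero_rpow_of_pos (by norm_num)]
    exact zero_le
  by_cases hM0 : Msup = 0
  · rw [hA0 (Or.inr hM0), ENNReal.zero_rpow_of_pos (by norm_num)]
    exact zero_le
  by_cases hBt : Bq = ⊤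
  · have h1 : Bq ^ (θ/2) = ⊤ := by
      rw [hBt]; exact ENNReal.top_rpow_of_pos (by positivity)
    have h2 : Msup ^ (1-θ) ≠ 0 := by
      rw [Ne, ENNReal.rpow_eq_zero_iff]
      push_neg
      constructor
      · intro h; exact absurd h hM0
      · intro h; linarith
    have h3 : ENNReal.ofReal ((1 + C₀) ^ ((1:ℝ)/2)) ≠ 0 := by
      rw [Ne, ENNReal.ofReal_eq_zero]
      push_neg
      exact Real.rpow_pos_of_pos (by linarith) _
    rw [h1, ENNReal.mul_top h3, ENNReal.top_mul h2]
    exact le_top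
  by_cases hMt : Msup = ⊤
  · have h1 : Msup ^ (1-θ) = ⊤ := by
      rw [hMt]; exact ENNReal.top_rpow_of_pos (by linarith)
    have h2 : Bq ^ (θ/2) ≠ 0 := by
      rw [Ne, ENNReal.rpow_eq_zero_iff]
      push_neg
      constructor
      · intro h; exact absurd h hB0
      · intro h; exact absurd hBt (by simp [h])
    have h3 : ENNReal.ofReal ((1 + C₀) ^ ((1:ℝ)/2)) ≠ 0 := by
      rw [Ne, ENNReal.ofReal_eq_zero]
      push_neg
      exact Real.rpow_pos_of_pos (by linarith) _
    rw [h1, ENNReal.mul_top (by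
      intro h
      rcases mul_eq_zero.1 h with h' | h'
      · exact h3 h'
      · exact h2 h')]
    exact le_top
  -- main case
  have hb : 0 < Bq.toReal := ENNReal.toReal_pos hB0 hBt
  have hμr : 0 < Msup.toReal := ENNReal.toReal_pos hM0 hMt
  obtain ⟨R, hRpos, hE1, hE2⟩ := opt_algebra hm hs hb hμr
  set b := Bq.toReal with hbdef
  set μr := Msup.toReal with hμrdef
  have hBeq : Bq = ENNReal.ofReal b := (ENNReal.ofReal_toReal hBt).symm
  have hMeq : Msup = ENNReal.ofReal μr := (ENNReal.ofReal_toReal hMt).symm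
  have hX : 0 < b ^ θ * μr ^ (2*(1-θ)) := by positivity
  have hkey2 : A ≤ ENNReal.ofReal ((1 + C₀) * (b ^ θ * μr ^ (2*(1-θ)))) := by
    have h1 := key R hRpos
    rw [hBeq, hMeq] at h1
    calc A ≤ ENNReal.ofReal (R ^ (-(2*m))) * ENNReal.ofReal b
          + ENNReal.ofReal (C₀ * R ^ (2*(k+ϱ))) * ENNReal.ofReal μr ^ 2 := h1
      _ = ENNReal.ofReal (R ^ (-(2*m)) * b)
          + ENNReal.ofReal (C₀ * R ^ (2*(k+ϱ)) * μr ^ (2:ℕ)) := by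
          rw [← ENNReal.ofReal_mul (Real.rpow_nonneg ?_ _),
            ← ENNReal.ofReal_pow hμr.le, ← ENNReal.ofReal_mul (by positivity)]
          · positivity
      _ = ENNReal.ofReal (b ^ θ * μr ^ (2*(1-θ)))
          + ENNReal.ofReal (C₀ * (b ^ θ * μr ^ (2*(1-θ)))) := by
          rw [hE1]
          congr 1
          rw [mul_assoc, hE2]
      _ = ENNReal.ofReal ((1 + C₀) * (b ^ θ * μr ^ (2*(1-θ)))) := by
          rw [← ENNReal.ofReal_add (by positivity) (by positivity)]
          congr 1; ring
  calc A ^ ((1:ℝ)/2)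
      ≤ (ENNReal.ofReal ((1 + C₀) * (b ^ θ * μr ^ (2*(1-θ))))) ^ ((1:ℝ)/2) :=
        ENNReal.rpow_le_rpow hkey2 (by norm_num)
    _ = ENNReal.ofReal (((1 + C₀) * (b ^ θ * μr ^ (2*(1-θ)))) ^ ((1:ℝ)/2)) :=
        ENNReal.ofReal_rpow_of_pos (by positivity)
    _ = ENNReal.ofReal ((1 + C₀) ^ ((1:ℝ)/2) * (b ^ (θ/2) * μr ^ (1-θ))) := by
        congr 1
        rw [Real.mul_rpow (by linarith) (by positivity),
          Real.mul_rpow (by positivity) (by positivity),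
          ← Real.rpow_mul hb.le, ← Real.rpow_mul hμr.le]
        ring_nf
    _ = ENNReal.ofReal ((1 + C₀) ^ ((1:ℝ)/2)) * Bq ^ (θ/2) * Msup ^ (1-θ) := by
        rw [hBeq, hMeq, ENNReal.ofReal_rpow_of_pos hb, ENNReal.ofReal_rpow_of_pos hμr,
          ENNReal.ofReal_mul (by positivity), ENNReal.ofReal_mul (by positivity),
          mul_assoc]
end
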